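/- The Langevin function L(x) = coth(x) - 1/x (with L(0) = 0) is strictly monotone increasing on ℝ, hence injective. -/

import Mathlib

noncomputable def langevin (x : ℝ) : ℝ :=
  if x = 0 then 0 else Real.cosh x / Real.sinh x - 1 / x

open Real Set

lemma aux_f_hasDerivAt (x : ℝ) :
    HasDerivAt (fun y => y * Real.cosh y - Real.sinh y) (x * Real.sinh x) x := by
  have h := ((hasDerivAt_id x).mul (Real.hasDerivAt_cosh x)).sub (Real.hasDerivAt_sinh x)
  exact (by simpa using h : HasDerivAt (id * Real.cosh - Real.sinh) (x * Real.sinh x) x)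

lemma sinh_lt_mul_cosh {x : ℝ} (hx : 0 < x) : Real.sinh x < x * Real.cosh x := by
  have hmono : StrictMonoOn (fun y => y * Real.cosh y - Real.sinh y) (Ici (0:ℝ)) := by
    apply strictMonoOn_of_deriv_pos (convex_Ici 0)
    · exact fun y _ => ((aux_f_hasDerivAt y).continuousAt).continuousWithinAt
    · intro y hy
      rw [interior_Ici] at hy
      rw [(aux_f_hasDerivAt y).deriv]
      exact mul_pos hy (Real.sinh_pos_iff.2 hy)
  have := hmono (self_mem_Ici) (le_of_lt hx : (0:ℝ) ≤ x) hx
  simp at this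
  linarith

lemma langevin_pos {x : ℝ} (hx : 0 < x) : 0 < langevin x := by
  have hs := Real.sinh_pos_iff.2 hx
  rw [langevin, if_neg hx.ne']
  rw [sub_pos, div_lt_div_iff₀ hx hs, one_mul]
  linarith [sinh_lt_mul_cosh hx]

lemma langevin_neg (x : ℝ) : langevin (-x) = -langevin x := by
  unfold langevin
  rcases eq_or_ne x 0 with h | h
  · simp [h]
  · rw [if_neg (neg_ne_zero.2 h), if_neg h, Real.cosh_neg, Real.sinh_neg]
    rw [div_neg, div_neg]
    ring

lemma langevin_hasDerivAt {x : ℝ} (hx : x ≠ 0) :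
    HasDerivAt langevin (1 / x ^ 2 - 1 / Real.sinh x ^ 2) x := by
  have hs : Real.sinh x ≠ 0 := Real.sinh_ne_zero.2 hx
  have h1 : HasDerivAt (fun y => Real.cosh y / Real.sinh y)
      ((Real.sinh x * Real.sinh x - Real.cosh x * Real.cosh x) / Real.sinh x ^ 2) x :=
    (Real.hasDerivAt_cosh x).div (Real.hasDerivAt_sinh x) hs
  have h2 : HasDerivAt (fun y : ℝ => 1 / y) (-(1 / x ^ 2)) x := by
    simpa [one_div] using hasDerivAt_inv hx
  have h := h1.sub h2
  have hk : Real.cosh x ^ 2 - Real.sinh x ^ 2 = 1 := Real.cosh_sq_sub_sinh_sq x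
  have heq : (Real.sinh x * Real.sinh x - Real.cosh x * Real.cosh x) / Real.sinh x ^ 2
      - -(1 / x ^ 2) = 1 / x ^ 2 - 1 / Real.sinh x ^ 2 := by
    have : Real.sinh x * Real.sinh x - Real.cosh x * Real.cosh x = -1 := by nlinarith
    rw [this]
    ring
  rw [heq] at h
  apply h.congr_of_eventuallyEq
  filter_upwards [isOpen_ne.mem_nhds hx] with y hy
  rw [langevin, if_neg hy]
  rfl

lemma langevin_strictMonoOn : StrictMonoOn langevin (Ioi (0:ℝ)) := by
  apply strictMonoOn_of_deriv_pos (convex_Ioi 0)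
  · exact fun y hy => ((langevin_hasDerivAt (ne_of_gt hy)).continuousAt).continuousWithinAt
  · intro y hy
    rw [interior_Ioi] at hy
    have hy0 : (0:ℝ) < y := hy
    rw [(langevin_hasDerivAt (ne_of_gt hy0)).deriv]
    have hsy : y < Real.sinh y := Real.self_lt_sinh_iff.2 hy0
    have : y ^ 2 < Real.sinh y ^ 2 := by nlinarith
    have hy2 : (0:ℝ) < y ^ 2 := by positivity
    have : 1 / Real.sinh y ^ 2 < 1 / y ^ 2 := by
      apply one_div_lt_one_div_of_lt hy2 this
    linarith

theorem langevin_strictMono : StrictMono langevin ∧ Function.Injective langevin := by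
  have h0 : langevin 0 = 0 := by simp [langevin]
  have hmono : StrictMono langevin := by
    intro a b hab
    rcases lt_trichotomy a 0 with ha | ha | ha
    · rcases lt_trichotomy b 0 with hb | hb | hb
      · have := langevin_strictMonoOn (mem_Ioi.2 (neg_pos.2 hb)) (mem_Ioi.2 (neg_pos.2 ha))
          (by linarith)
        rw [langevin_neg, langevin_neg] at this
        linarith
      · subst hb
        rw [h0]
        have := langevin_pos (neg_pos.2 ha)
        rw [langevin_neg] at this
        linarith
      · have h1 := langevin_pos hb
        have h2 := langevin_pos (neg_pos.2 ha)
        rw [langevin_neg] at h2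
        linarith
    · subst ha
      rw [h0]
      exact langevin_pos hab
    · exact langevin_strictMonoOn (mem_Ioi.2 ha) (mem_Ioi.2 (lt_trans ha hab)) hab
  exact ⟨hmono, hmono.injective⟩
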